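/- arXiv:1509.04160 — 3 statements merged into one kernel-verified Lean document; each statement's English description precedes it below -/
import Mathlib

section
/- Let W ⊂ H be a closed subspace, A ∈ B(H) boundedly invertible, and λ > 0. Then the operator R(λ) := A P_W + λ A^{-*} P_{W^⊥} is boundedly invertible and the orthogonal projection onto AW satisfies P_{AW} = R(λ)^{-*} P_W A^*. -/
open ContinuousLinearMap

/-- The orthogonal projection of `H` onto a complete subspace `W`, viewed as an
operator `H →L[ℂ] H`. -/
noncomputable def proj {H : Type*} [NormedAddCommGroup H] [InnerProductSpace ℂ H]
    (W : Submodule ℂ H) [CompleteSpace W] : H →L[ℂ] H :=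
  W.subtypeL.comp W.orthogonalProjectionOnto

section aux

variable {H : Type*} [NormedAddCommGroup H] [InnerProductSpace ℂ H] [CompleteSpace H]

lemma proj_mem (K : Submodule ℂ H) [CompleteSpace K] (x : H) : proj K x ∈ K :=
  (K.orthogonalProjectionOnto x).2

lemma proj_eq_of (K : Submodule ℂ H) [CompleteSpace K] {x u : H} (hu : u ∈ K)
    (h : x - u ∈ Kᗮ) : proj K x = u :=
  Submodule.eq_starProjection_of_mem_orthogonal hu h

lemma proj_self_of_mem (K : Submodule ℂ H) [CompleteSpace K] {u : H} (hu : u ∈ K) :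
    proj K u = u :=
  proj_eq_of K hu (by simpa using Kᗮ.zero_mem)

lemma proj_zero_of_mem_orth (K : Submodule ℂ H) [CompleteSpace K] {u : H} (hu : u ∈ Kᗮ) :
    proj K u = 0 :=
  proj_eq_of K K.zero_mem (by simpa using hu)

lemma proj_orth_apply (K : Submodule ℂ H) [CompleteSpace K] (x : H) :
    proj Kᗮ x = x - proj K x :=
  Submodule.starProjection_orthogonal_val x

lemma proj_sub_mem_orth (K : Submodule ℂ H) [CompleteSpace K] (x : H) :
    x - proj K x ∈ Kᗮ :=
  Submodule.sub_starProjection_mem_orthogonal x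

lemma adjoint_proj (K : Submodule ℂ H) [CompleteSpace K] :
    ContinuousLinearMap.adjoint (proj K) = proj K :=
  (isSelfAdjoint_starProjection K).adjoint_eq

end aux

set_option maxHeartbeats 1000000 in
/-- For a closed subspace `W ⊂ H`, a boundedly invertible `A ∈ B(H)` and `λ > 0`, the
operator `R(λ) = A P_W + λ A^{-*} P_{Wᗮ}` is boundedly invertible and
`P_{AW} = R(λ)^{-*} P_W A*`. -/
theorem proj_map_eq {H : Type*} [NormedAddCommGroup H] [InnerProductSpace ℂ H]
    [CompleteSpace H] (W : Submodule ℂ H) [CompleteSpace W]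
    (A : H ≃L[ℂ] H) [CompleteSpace (W.map ((A : H →L[ℂ] H) : H →ₗ[ℂ] H))] (lam : ℝ) (hlam : 0 < lam) :
    ∃ R : H ≃L[ℂ] H,
      (R : H →L[ℂ] H) =
        (A : H →L[ℂ] H).comp (proj W) +
          (lam : ℂ) • (adjoint (A.symm : H →L[ℂ] H)).comp (proj Wᗮ) ∧
      proj (W.map ((A : H →L[ℂ] H) : H →ₗ[ℂ] H)) =
        (adjoint (R.symm : H →L[ℂ] H)).comp ((proj W).comp (adjoint (A : H →L[ℂ] H))) := by
  set A' : H →L[ℂ] H := (A : H →L[ℂ] H) with hA'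
  set B : H →L[ℂ] H := (A.symm : H →L[ℂ] H) with hB
  set V : Submodule ℂ H := W.map (A' : H →ₗ[ℂ] H) with hVdef
  have hlam0 : (lam : ℂ) ≠ 0 := by
    exact_mod_cast Complex.ofReal_ne_zero.mpr hlam.ne'
  -- basic algebraic facts
  have hBA : ∀ x, B (A' x) = x := fun x => A.symm_apply_apply x
  have hAB : ∀ x, A' (B x) = x := fun x => A.apply_symm_apply x
  have hadjAB : ∀ x, adjoint A' (adjoint B x) = x := by
    intro x
    have : adjoint B ∘L adjoint A' = adjoint (A' ∘L B) := (adjoint_comp A' B).symm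
    have h2 : A' ∘L B = ContinuousLinearMap.id ℂ H := by ext y; simp [hAB]
    have h3 : adjoint A' ∘L adjoint B = ContinuousLinearMap.id ℂ H := by
      rw [← adjoint_comp]
      have : B ∘L A' = ContinuousLinearMap.id ℂ H := by ext y; simp [hBA]
      rw [this, adjoint_id]
    exact congrFun (congrArg DFunLike.coe h3) x
  have hadjBA : ∀ x, adjoint B (adjoint A' x) = x := by
    intro x
    have h3 : adjoint B ∘L adjoint A' = ContinuousLinearMap.id ℂ H := by
      rw [← adjoint_comp]
      have : A' ∘L B = ContinuousLinearMap.id ℂ H := by ext y; simp [hAB]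
      rw [this, adjoint_id]
    exact congrFun (congrArg DFunLike.coe h3) x
  -- membership transfer facts
  have hmemV : ∀ w ∈ W, A' w ∈ V := fun w hw => Submodule.mem_map_of_mem hw
  have hBV : ∀ y ∈ V, B y ∈ W := by
    rintro y ⟨w, hw, rfl⟩
    simpa [hBA] using hw
  have hBperp : ∀ z ∈ Wᗮ, adjoint B z ∈ Vᗮ := by
    intro z hz
    rw [Submodule.mem_orthogonal]
    rintro u ⟨w, hw, rfl⟩
    rw [adjoint_inner_right]
    simpa [hBA] using hz w hw
  have hAstarPerp : ∀ y ∈ Vᗮ, adjoint A' y ∈ Wᗮ := by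
    intro y hy
    rw [Submodule.mem_orthogonal]
    intro w hw
    rw [adjoint_inner_right]
    exact hy (A' w) (hmemV w hw)
  -- the candidate operator and its inverse
  set Rm : H →L[ℂ] H := A'.comp (proj W) + (lam : ℂ) • (adjoint B).comp (proj Wᗮ) with hRm
  set S : H →L[ℂ] H := B.comp (proj V) + ((lam : ℂ))⁻¹ • (adjoint A').comp (proj Vᗮ) with hS
  have hRmApply : ∀ x, Rm x = A' (proj W x) + (lam : ℂ) • adjoint B (proj Wᗮ x) := by
    intro x; simp [hRm]
  have hSApply : ∀ y, S y = B (proj V y) + ((lam : ℂ))⁻¹ • adjoint A' (proj Vᗮ y) := by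
    intro y; simp [hS]
  -- projection of Rm x onto V
  have hprojV_Rm : ∀ x, proj V (Rm x) = A' (proj W x) := by
    intro x
    refine proj_eq_of V (hmemV _ (proj_mem W x)) ?_
    have : Rm x - A' (proj W x) = (lam : ℂ) • adjoint B (proj Wᗮ x) := by
      rw [hRmApply]; abel
    rw [this]
    exact Vᗮ.smul_mem _ (hBperp _ (proj_mem Wᗮ x))
  have hSR : ∀ x, S (Rm x) = x := by
    intro x
    have h1 : proj Vᗮ (Rm x) = (lam : ℂ) • adjoint B (proj Wᗮ x) := by
      rw [proj_orth_apply, hprojV_Rm, hRmApply]; abel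
    rw [hSApply, hprojV_Rm, h1, hBA]
    rw [map_smul, hadjAB, smul_smul, inv_mul_cancel₀ hlam0, one_smul,
      proj_orth_apply]
    abel
  -- projection of S y onto W
  have hprojW_S : ∀ y, proj W (S y) = B (proj V y) := by
    intro y
    refine proj_eq_of W (hBV _ (proj_mem V y)) ?_
    have : S y - B (proj V y) = ((lam : ℂ))⁻¹ • adjoint A' (proj Vᗮ y) := by
      rw [hSApply]; abel
    rw [this]
    exact Wᗮ.smul_mem _ (hAstarPerp _ (proj_mem Vᗮ y))
  have hRS : ∀ y, Rm (S y) = y := by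
    intro y
    have h1 : proj Wᗮ (S y) = ((lam : ℂ))⁻¹ • adjoint A' (proj Vᗮ y) := by
      rw [proj_orth_apply, hprojW_S, hSApply]; abel
    rw [hRmApply, hprojW_S, h1, hAB]
    rw [map_smul, hadjBA, smul_smul, mul_inv_cancel₀ hlam0, one_smul,
      proj_orth_apply]
    abel
  refine ⟨ContinuousLinearEquiv.equivOfInverse Rm S hSR hRS, rfl, ?_⟩
  have hsymm : ((ContinuousLinearEquiv.equivOfInverse Rm S hSR hRS).symm : H →L[ℂ] H) = S := rfl
  rw [hsymm]
  -- adjoint of Rm applied to proj V x equals proj W (adjoint A' x)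
  have hkey : ∀ x, adjoint Rm (proj V x) = proj W (adjoint A' x) := by
    intro x
    have hadjRm : adjoint Rm =
        (_root_.proj W) ∘L (adjoint A') + (lam : ℂ) • ((_root_.proj Wᗮ) ∘L B) := by
      have h1 : adjoint (A'.comp (_root_.proj W)) = (_root_.proj W) ∘L (adjoint A') := by
        rw [adjoint_comp, adjoint_proj]
      have h2 : adjoint ((lam : ℂ) • (adjoint B).comp (proj Wᗮ)) =
          (lam : ℂ) • ((_root_.proj Wᗮ) ∘L B) := by
        rw [← star_eq_adjoint, star_smul, star_eq_adjoint, adjoint_comp, adjoint_adjoint,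
          adjoint_proj]
        simp [Complex.star_def, Complex.conj_ofReal]
      rw [hRm, ← star_eq_adjoint, star_add, star_eq_adjoint, star_eq_adjoint, h1, h2]
    rw [hadjRm]
    have hterm2 : proj Wᗮ (B (proj V x)) = 0 :=
      proj_zero_of_mem_orth Wᗮ (W.le_orthogonal_orthogonal (hBV _ (proj_mem V x)))
    have hterm1 : proj W (adjoint A' (proj V x)) = proj W (adjoint A' x) := by
      have hd : adjoint A' x - adjoint A' (proj V x) = adjoint A' (x - proj V x) := by
        rw [map_sub]
      have hz : proj W (adjoint A' (x - proj V x)) = 0 :=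
        proj_zero_of_mem_orth W (hAstarPerp _ (proj_sub_mem_orth V x))
      have := map_sub (proj W) (adjoint A' x) (adjoint A' (proj V x))
      rw [hd, hz] at this
      exact (sub_eq_zero.mp this.symm).symm
    simp only [ContinuousLinearMap.add_apply, ContinuousLinearMap.smul_apply,
      ContinuousLinearMap.comp_apply, hterm1, hterm2, smul_zero, add_zero]
  -- conclude
  ext x
  have hcomp : adjoint S (adjoint Rm (proj V x)) = proj V x := by
    have h3 : adjoint S ∘L adjoint Rm = ContinuousLinearMap.id ℂ H := by
      rw [← adjoint_comp]
      have : Rm ∘L S = ContinuousLinearMap.id ℂ H := by ext y; simp [hRS y]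
      rw [this, adjoint_id]
    exact congrFun (congrArg DFunLike.coe h3) (proj V x)
  simp only [ContinuousLinearMap.comp_apply]
  rw [← hkey x, hcomp]
end

section
/- Let A be a B(H,K)-valued frame sequence with lower frame bound α and B a B(H,K)-valued Bessel sequence. Then the gap from H_A to H_B satisfies δ(H_A, H_B) ≤ ‖T_A - T_B‖/√α, and also δ(ran T_A, cl(ran T_B)) ≤ ‖T_A - T_B‖/√α. -/
open ContinuousLinearMap

/-- The gap `δ(V,W) = ‖P_{Wᗮ}|V‖` from `V` to `W`. -/
noncomputable def gap {H : Type*} [NormedAddCommGroup H] [InnerProductSpace ℂ H]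
    [CompleteSpace H] (V W : Submodule ℂ H) : ℝ :=
  ‖(proj Wᗮ).comp V.subtypeL‖

lemma orth_closure_range_adjoint {H E : Type*} [NormedAddCommGroup H] [InnerProductSpace ℂ H]
    [CompleteSpace H] [NormedAddCommGroup E] [InnerProductSpace ℂ E] [CompleteSpace E]
    (T : H →L[ℂ] E) :
    ((LinearMap.range ((adjoint T : E →ₗ[ℂ] H))).topologicalClosure)ᗮ = LinearMap.ker (T : H →ₗ[ℂ] E) := by
  rw [← Submodule.orthogonal_orthogonal_eq_closure, Submodule.triorthogonal_eq_orthogonal]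
  ext x
  simp only [Submodule.mem_orthogonal, LinearMap.mem_range, LinearMap.mem_ker,
    ContinuousLinearMap.coe_coe]
  constructor
  · intro h
    have := h (adjoint T (T x)) ⟨T x, rfl⟩
    rwa [ContinuousLinearMap.adjoint_inner_left, inner_self_eq_zero] at this
  · rintro h u ⟨y, rfl⟩
    rw [ContinuousLinearMap.adjoint_inner_left, h, inner_zero_right]

/-- If `A` is an operator-valued frame sequence with lower frame bound `α` (analysis
operator `T_A`) and `B` is an operator-valued Bessel sequence (analysis operator `T_B`),
then `δ(H_A, H_B) ≤ ‖T_A - T_B‖/√α` and `δ(ran T_A, cl ran T_B) ≤ ‖T_A - T_B‖/√α`. -/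
theorem gap_le_of_perturbation {H K : Type*}
    [NormedAddCommGroup H] [InnerProductSpace ℂ H] [CompleteSpace H]
    [NormedAddCommGroup K] [InnerProductSpace ℂ K] [CompleteSpace K]
    {I : Type*} [Countable I] (TA TB : H →L[ℂ] lp (fun _ : I => K) 2)
    (α : ℝ) (hα : 0 < α)
    (hframe : ∀ x ∈ (LinearMap.range ((adjoint TA : lp (fun _ : I => K) 2 →ₗ[ℂ] H))).topologicalClosure,
      α * ‖x‖ ^ 2 ≤ ‖TA x‖ ^ 2) :
    gap (LinearMap.range ((adjoint TA : lp (fun _ : I => K) 2 →ₗ[ℂ] H))).topologicalClosure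
        (LinearMap.range ((adjoint TB : lp (fun _ : I => K) 2 →ₗ[ℂ] H))).topologicalClosure ≤ ‖TA - TB‖ / Real.sqrt α ∧
    gap (LinearMap.range (TA : H →ₗ[ℂ] lp (fun _ : I => K) 2)) (LinearMap.range (TB : H →ₗ[ℂ] lp (fun _ : I => K) 2)).topologicalClosure ≤
      ‖TA - TB‖ / Real.sqrt α := by
  set VA := (LinearMap.range ((adjoint TA : lp (fun _ : I => K) 2 →ₗ[ℂ] H))).topologicalClosure with hVA
  set VB := (LinearMap.range ((adjoint TB : lp (fun _ : I => K) 2 →ₗ[ℂ] H))).topologicalClosure with hVB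
  have hsα : 0 < Real.sqrt α := Real.sqrt_pos.2 hα
  have hc : 0 ≤ ‖TA - TB‖ / Real.sqrt α := by positivity
  -- frame bound in sqrt form
  have hfr : ∀ w ∈ VA, Real.sqrt α * ‖w‖ ≤ ‖TA w‖ := by
    intro w hw
    have h := hframe w hw
    have : Real.sqrt α * ‖w‖ = Real.sqrt (α * ‖w‖ ^ 2) := by
      rw [Real.sqrt_mul hα.le, Real.sqrt_sq (norm_nonneg _)]
    rw [this]
    calc Real.sqrt (α * ‖w‖ ^ 2) ≤ Real.sqrt (‖TA w‖ ^ 2) := Real.sqrt_le_sqrt h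
      _ = ‖TA w‖ := Real.sqrt_sq (norm_nonneg _)
  have hkerA : VAᗮ = LinearMap.ker (TA : H →ₗ[ℂ] lp (fun _ : I => K) 2) := orth_closure_range_adjoint TA
  have hkerB : VBᗮ = LinearMap.ker (TB : H →ₗ[ℂ] lp (fun _ : I => K) 2) := orth_closure_range_adjoint TB
  constructor
  · refine ContinuousLinearMap.opNorm_le_bound _ hc ?_
    rintro ⟨x, hx⟩
    show ‖((VBᗮ).orthogonalProjectionOnto x : H)‖ ≤ ‖TA - TB‖ / Real.sqrt α * ‖x‖
    set z : H := ((VBᗮ).orthogonalProjectionOnto x : H) with hzdef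
    have hz : z ∈ VBᗮ := ((VBᗮ).orthogonalProjectionOnto x).2
    have hTBz : TB z = 0 := by rw [hkerB] at hz; exact hz
    -- z inner x = ‖z‖²
    have hxz : (x : H) - z ∈ VBᗮᗮ := Submodule.sub_starProjection_mem_orthogonal x
    have h1 : (inner ℂ z (x : H)) = (‖z‖ : ℂ) ^ 2 := by
      have h0 : (inner ℂ z ((x : H) - z)) = 0 :=
        Submodule.inner_right_of_mem_orthogonal hz hxz
      have := inner_sub_right (𝕜 := ℂ) z x z
      rw [h0] at this
      have h2 : (inner ℂ z (x : H)) = inner ℂ z z := by linear_combination -this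
      rw [h2, inner_self_eq_norm_sq_to_K]
      norm_num
    -- w := projection of z onto VA
    set w : H := ((VA).orthogonalProjectionOnto z : H) with hwdef
    have hw : w ∈ VA := ((VA).orthogonalProjectionOnto z).2
    have hzw : z - w ∈ VAᗮ := Submodule.sub_starProjection_mem_orthogonal z
    have hTAzw : TA (z - w) = 0 := by rw [hkerA] at hzw; exact hzw
    have hTAw : TA w = (TA - TB) z := by
      have h3 : TA z - TA w = 0 := by rw [← map_sub]; exact hTAzw
      rw [sub_eq_zero] at h3
      rw [← h3, ContinuousLinearMap.sub_apply, hTBz, sub_zero]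
    -- ‖z‖² = re ⟪w, x⟫ ≤ ‖w‖‖x‖
    have h4 : (inner ℂ (z - w) (x : H)) = 0 :=
      Submodule.inner_left_of_mem_orthogonal hx hzw
    have h5 : (inner ℂ w (x : H)) = (‖z‖ : ℂ) ^ 2 := by
      have := inner_sub_left (𝕜 := ℂ) z w x
      rw [h4] at this
      linear_combination this + h1
    have h6 : ‖z‖ ^ 2 ≤ ‖w‖ * ‖x‖ := by
      calc ‖z‖ ^ 2 = ‖(‖z‖ : ℂ) ^ 2‖ := by
            rw [← Complex.ofReal_pow, Complex.norm_real,
              Real.norm_of_nonneg (by positivity)]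
        _ = ‖(inner ℂ w (x : H))‖ := by rw [h5]
        _ ≤ ‖w‖ * ‖x‖ := norm_inner_le_norm _ _
    have h7 : Real.sqrt α * ‖w‖ ≤ ‖TA - TB‖ * ‖z‖ := by
      calc Real.sqrt α * ‖w‖ ≤ ‖TA w‖ := hfr w hw
        _ = ‖(TA - TB) z‖ := by rw [hTAw]
        _ ≤ ‖TA - TB‖ * ‖z‖ := ContinuousLinearMap.le_opNorm _ _
    -- conclude ‖z‖ ≤ c * ‖x‖
    rcases eq_or_lt_of_le (norm_nonneg z) with hz0 | hz0
    · rw [← hz0]; positivity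
    · rw [div_mul_eq_mul_div, le_div_iff₀ hsα]
      have : ‖z‖ * (‖z‖ * Real.sqrt α) ≤ ‖z‖ * (‖TA - TB‖ * ‖x‖) := by
        calc ‖z‖ * (‖z‖ * Real.sqrt α) = Real.sqrt α * ‖z‖ ^ 2 := by ring
          _ ≤ Real.sqrt α * (‖w‖ * ‖x‖) :=
            mul_le_mul_of_nonneg_left h6 hsα.le
          _ = (Real.sqrt α * ‖w‖) * ‖x‖ := by ring
          _ ≤ (‖TA - TB‖ * ‖z‖) * ‖x‖ :=
            mul_le_mul_of_nonneg_right h7 (norm_nonneg _)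
          _ = ‖z‖ * (‖TA - TB‖ * ‖x‖) := by ring
      exact le_of_mul_le_mul_left this hz0
  · refine ContinuousLinearMap.opNorm_le_bound _ hc ?_
    rintro ⟨y, hy⟩
    obtain ⟨x, rfl⟩ := hy
    set W := (LinearMap.range (TB : H →ₗ[ℂ] lp (fun _ : I => K) 2)).topologicalClosure with hW
    show ‖((Wᗮ).orthogonalProjectionOnto (TA x) : lp (fun _ : I => K) 2)‖ ≤
      ‖TA - TB‖ / Real.sqrt α * ‖TA x‖
    set w : H := ((VA).orthogonalProjectionOnto x : H) with hwdef
    have hw : w ∈ VA := ((VA).orthogonalProjectionOnto x).2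
    have hxw : x - w ∈ VAᗮ := Submodule.sub_starProjection_mem_orthogonal x
    have hTAw : TA w = TA x := by
      rw [hkerA] at hxw
      have h0 : TA (x - w) = 0 := hxw
      rw [map_sub, sub_eq_zero] at h0
      exact h0.symm
    have hTBw : (Wᗮ).orthogonalProjectionOnto (TB w) = 0 :=
      Submodule.orthogonalProjectionOnto_apply_of_mem_orthogonal
        (W.le_orthogonal_orthogonal (Submodule.le_topologicalClosure _ ⟨w, rfl⟩))
    have hproj : (Wᗮ).orthogonalProjectionOnto (TA x) = (Wᗮ).orthogonalProjectionOnto ((TA - TB) w) := by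
      rw [← hTAw, ContinuousLinearMap.sub_apply, map_sub, hTBw, sub_zero]
    have hnorm : ‖((Wᗮ).orthogonalProjectionOnto (TA x) : lp (fun _ : I => K) 2)‖
        ≤ ‖(TA - TB) w‖ := by
      rw [hproj]
      calc ‖((Wᗮ).orthogonalProjectionOnto ((TA - TB) w) : lp (fun _ : I => K) 2)‖
          ≤ ‖(Wᗮ).orthogonalProjectionOnto‖ * ‖(TA - TB) w‖ :=
            ((Wᗮ).orthogonalProjectionOnto).le_opNorm _
        _ ≤ 1 * ‖(TA - TB) w‖ :=
            mul_le_mul_of_nonneg_right (Submodule.orthogonalProjectionOnto_norm_le _) (norm_nonneg _)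
        _ = ‖(TA - TB) w‖ := one_mul _
    have hyn : ‖(⟨TA x, ⟨x, rfl⟩⟩ : LinearMap.range (TA : H →ₗ[ℂ] lp (fun _ : I => K) 2))‖ = ‖TA x‖ := rfl
    have hwb : Real.sqrt α * ‖w‖ ≤ ‖TA x‖ := by
      rw [← hTAw]; exact hfr w hw
    have : ‖((Wᗮ).orthogonalProjectionOnto (TA x) : lp (fun _ : I => K) 2)‖
        ≤ ‖TA - TB‖ / Real.sqrt α * ‖TA x‖ := by
      calc ‖((Wᗮ).orthogonalProjectionOnto (TA x) : lp (fun _ : I => K) 2)‖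
          ≤ ‖(TA - TB) w‖ := hnorm
        _ ≤ ‖TA - TB‖ * ‖w‖ := ContinuousLinearMap.le_opNorm _ _
        _ ≤ ‖TA - TB‖ * (‖TA x‖ / Real.sqrt α) := by
            refine mul_le_mul_of_nonneg_left ?_ (by positivity)
            rw [le_div_iff₀ hsα, mul_comm]
            exact hwb
        _ = ‖TA - TB‖ / Real.sqrt α * ‖TA x‖ := by ring
    exact this
end

section
/- Let A be a B(H,K)-valued frame sequence with lower frame bound α and B a μ-perturbation of A (‖T_A - T_B‖ ≤ μ) with μ < √α and Δ(H_A, H_B) < 1. Then Δ(ran T_A, ran T_B) ≤ μ/(√α - μ). -/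
set_option synthInstance.maxHeartbeats 1000000
set_option maxHeartbeats 1000000


open ContinuousLinearMap

lemma norm_proj_le {H : Type*} [NormedAddCommGroup H] [InnerProductSpace ℂ H]
    (W : Submodule ℂ H) [CompleteSpace W] (u : H) : ‖proj W u‖ ≤ ‖u‖ := by
  have h1 : ‖proj W u‖ = ‖(Submodule.orthogonalProjectionOnto W) u‖ := rfl
  rw [h1]
  calc ‖(Submodule.orthogonalProjectionOnto W) u‖ ≤ ‖((Submodule.orthogonalProjectionOnto W) : H →L[ℂ] W)‖ * ‖u‖ :=
        ((Submodule.orthogonalProjectionOnto W)).le_opNorm u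
    _ ≤ 1 * ‖u‖ := mul_le_mul_of_nonneg_right (Submodule.orthogonalProjectionOnto_norm_le W) (norm_nonneg u)
    _ = ‖u‖ := one_mul _

lemma norm_proj_orthogonal_le_dist {H : Type*} [NormedAddCommGroup H] [InnerProductSpace ℂ H]
    [CompleteSpace H] (W : Submodule ℂ H) (y w : H) (hw : w ∈ W) :
    ‖proj Wᗮ y‖ ≤ ‖y - w‖ := by
  have h0 : proj Wᗮ w = 0 := by
    have : (Submodule.orthogonalProjectionOnto Wᗮ) w = 0 :=
      Submodule.orthogonalProjectionOnto_apply_of_mem_orthogonal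
        (W.le_orthogonal_orthogonal hw)
    simp [_root_.proj, this]
  calc ‖proj Wᗮ y‖ = ‖proj Wᗮ (y - w)‖ := by rw [map_sub, h0, sub_zero]
    _ ≤ ‖y - w‖ := norm_proj_le _ _

lemma gap_le {H : Type*} [NormedAddCommGroup H] [InnerProductSpace ℂ H]
    [CompleteSpace H] (V W : Submodule ℂ H) {c : ℝ} (hc : 0 ≤ c)
    (h : ∀ y ∈ V, ‖proj Wᗮ y‖ ≤ c * ‖y‖) : gap V W ≤ c :=
  ContinuousLinearMap.opNorm_le_bound _ hc fun x => h x x.2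

/-- If `A` is an operator-valued frame sequence with lower frame bound `α` and `B` is a
`μ`-perturbation of `A` with `μ < √α` and `Δ(H_A,H_B) < 1`, then
`Δ(ran T_A, ran T_B) ≤ μ/(√α - μ)`. -/
theorem gap_range_le_of_perturbation {H K : Type*}
    [NormedAddCommGroup H] [InnerProductSpace ℂ H] [CompleteSpace H]
    [NormedAddCommGroup K] [InnerProductSpace ℂ K] [CompleteSpace K]
    {I : Type*} [Countable I] (TA TB : H →L[ℂ] lp (fun _ : I => K) 2)
    (HA HB : Submodule ℂ H)
    (hHA : HA = (LinearMap.range (adjoint TA : lp (fun _ : I => K) 2 →ₗ[ℂ] H)).topologicalClosure)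
    (hHB : HB = (LinearMap.range (adjoint TB : lp (fun _ : I => K) 2 →ₗ[ℂ] H)).topologicalClosure)
    (α : ℝ) (hα : 0 < α)
    (hframe : ∀ x ∈ HA, α * ‖x‖ ^ 2 ≤ ‖TA x‖ ^ 2)
    (μ : ℝ) (hμ : ‖TA - TB‖ ≤ μ) (hμα : μ < Real.sqrt α)
    (hΔ : max (gap HA HB) (gap HB HA) < 1) :
    max (gap (LinearMap.range (TA : H →ₗ[ℂ] lp (fun _ : I => K) 2))
          (LinearMap.range (TB : H →ₗ[ℂ] lp (fun _ : I => K) 2)))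
        (gap (LinearMap.range (TB : H →ₗ[ℂ] lp (fun _ : I => K) 2))
          (LinearMap.range (TA : H →ₗ[ℂ] lp (fun _ : I => K) 2))) ≤ μ / (Real.sqrt α - μ) := by
  have hμ0 : 0 ≤ μ := le_trans (norm_nonneg (TA - TB)) hμ
  have hden : 0 < Real.sqrt α - μ := sub_pos.mpr hμα
  have hsα : 0 < Real.sqrt α := lt_of_le_of_lt hμ0 hμα
  haveI cHA : CompleteSpace HA := by
    rw [hHA]; exact (Submodule.isClosed_topologicalClosure _).completeSpace_coe
  haveI cHB : CompleteSpace HB := by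
    rw [hHB]; exact (Submodule.isClosed_topologicalClosure _).completeSpace_coe
  -- kernels
  have key : ∀ T : H →L[ℂ] lp (fun _ : I => K) 2,
      (LinearMap.range (adjoint T : lp (fun _ : I => K) 2 →ₗ[ℂ] H))ᗮ
        = LinearMap.ker (T : H →ₗ[ℂ] lp (fun _ : I => K) 2) := by
    intro T
    ext x
    simp only [Submodule.mem_orthogonal, LinearMap.mem_range, LinearMap.mem_ker,
      forall_exists_index]
    constructor
    · intro h
      have := h (adjoint T (T x)) (T x) rfl
      rw [ContinuousLinearMap.adjoint_inner_left] at this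
      exact inner_self_eq_zero.mp this
    · rintro h u y rfl
      simp only [ContinuousLinearMap.coe_coe] at h ⊢
      rw [ContinuousLinearMap.adjoint_inner_left, h, inner_zero_right]
  have hkerA : HAᗮ = LinearMap.ker (TA : H →ₗ[ℂ] lp (fun _ : I => K) 2) := by
    rw [hHA, ← Submodule.orthogonal_orthogonal_eq_closure,
      Submodule.triorthogonal_eq_orthogonal, key]
  have hkerB : HBᗮ = LinearMap.ker (TB : H →ₗ[ℂ] lp (fun _ : I => K) 2) := by
    rw [hHB, ← Submodule.orthogonal_orthogonal_eq_closure,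
      Submodule.triorthogonal_eq_orthogonal, key]
  -- T kills the orthogonal complement
  have hkA : ∀ v : H, TA v = TA ((Submodule.orthogonalProjectionOnto HA) v) := by
    intro v
    have hmem : v - (Submodule.orthogonalProjectionOnto HA) v ∈ LinearMap.ker (TA : H →ₗ[ℂ] lp (fun _ : I => K) 2) := by
      rw [← hkerA]; exact Submodule.sub_starProjection_mem_orthogonal (K := HA) v
    have h0 : TA (v - (Submodule.orthogonalProjectionOnto HA) v) = 0 := hmem
    rw [map_sub, sub_eq_zero] at h0
    exact h0
  have hkB : ∀ v : H, TB v = TB ((Submodule.orthogonalProjectionOnto HB) v) := by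
    intro v
    have hmem : v - (Submodule.orthogonalProjectionOnto HB) v ∈ LinearMap.ker (TB : H →ₗ[ℂ] lp (fun _ : I => K) 2) := by
      rw [← hkerB]; exact Submodule.sub_starProjection_mem_orthogonal (K := HB) v
    have h0 : TB (v - (Submodule.orthogonalProjectionOnto HB) v) = 0 := hmem
    rw [map_sub, sub_eq_zero] at h0
    exact h0
  -- lower bounds
  have hlow : ∀ x ∈ HA, Real.sqrt α * ‖x‖ ≤ ‖TA x‖ := by
    intro x hx
    have h1 : Real.sqrt (α * ‖x‖ ^ 2) ≤ Real.sqrt (‖TA x‖ ^ 2) :=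
      Real.sqrt_le_sqrt (hframe x hx)
    rwa [Real.sqrt_mul hα.le, Real.sqrt_sq (norm_nonneg _), Real.sqrt_sq (norm_nonneg _)] at h1
  have hdiff : ∀ x : H, ‖TA x - TB x‖ ≤ μ * ‖x‖ := by
    intro x
    have h1 : ‖(TA - TB) x‖ ≤ ‖TA - TB‖ * ‖x‖ := (TA - TB).le_opNorm x
    rw [ContinuousLinearMap.sub_apply] at h1
    exact h1.trans (mul_le_mul_of_nonneg_right hμ (norm_nonneg x))
  have hlowB : ∀ x ∈ HA, (Real.sqrt α - μ) * ‖x‖ ≤ ‖TB x‖ := by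
    intro x hx
    have h1 := hlow x hx
    have h2 := hdiff x
    have h3 : ‖TA x‖ ≤ ‖TB x‖ + ‖TA x - TB x‖ := by
      have he : TB x + (TA x - TB x) = TA x := by abel
      calc ‖TA x‖ = ‖TB x + (TA x - TB x)‖ := by rw [he]
        _ ≤ ‖TB x‖ + ‖TA x - TB x‖ := norm_add_le _ _
    have : (Real.sqrt α - μ) * ‖x‖ = Real.sqrt α * ‖x‖ - μ * ‖x‖ := by ring
    linarith
  -- surjectivity of P_HB from HA onto HB
  have hgapBA : gap HB HA < 1 := lt_of_le_of_lt (le_max_right _ _) hΔ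
  set S : HB →L[ℂ] HB :=
    ((Submodule.orthogonalProjectionOnto HB)).comp ((_root_.proj HA).comp HB.subtypeL) with hSdef
  have hSnorm : ‖(1 : HB →L[ℂ] HB) - S‖ ≤ gap HB HA := by
    refine ContinuousLinearMap.opNorm_le_bound _ (norm_nonneg ((_root_.proj HAᗮ).comp HB.subtypeL)) fun z => ?_
    have hz1 : ((1 : HB →L[ℂ] HB) - S) z = z - S z := rfl
    have hz2 : z - S z = (Submodule.orthogonalProjectionOnto HB) ((z : H) - _root_.proj HA (z : H)) := by
      rw [map_sub]
      congr 1
      exact (Submodule.orthogonalProjectionOnto_mem_subspace_eq_self z).symm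
    have hz3 : (z : H) - _root_.proj HA (z : H) = ((_root_.proj HAᗮ).comp HB.subtypeL) z := by
      have := Submodule.starProjection_add_starProjection_orthogonal (K := HA) (z : H)
      have h4 : ((_root_.proj HAᗮ).comp HB.subtypeL) z = proj HAᗮ (z : H) := rfl
      rw [h4]
      show (z : H) - ((Submodule.orthogonalProjectionOnto HA) (z : H) : H)
        = ((Submodule.orthogonalProjectionOnto HAᗮ) (z : H) : H)
      exact (eq_sub_of_add_eq' this).symm
    rw [hz1, hz2]
    calc ‖(Submodule.orthogonalProjectionOnto HB) ((z : H) - _root_.proj HA (z : H))‖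
        ≤ ‖(z : H) - _root_.proj HA (z : H)‖ := by
          have := norm_proj_le HB ((z : H) - _root_.proj HA (z : H))
          simpa [_root_.proj] using this
      _ = ‖((_root_.proj HAᗮ).comp HB.subtypeL) z‖ := by rw [hz3]
      _ ≤ gap HB HA * ‖z‖ := ((_root_.proj HAᗮ).comp HB.subtypeL).le_opNorm z
  have hSsurj : ∀ z : HB, ∃ w : HB, S w = z := by
    have hlt : ‖(1 : HB →L[ℂ] HB) - S‖ < 1 := lt_of_le_of_lt hSnorm hgapBA
    set u := Units.oneSub ((1 : HB →L[ℂ] HB) - S) hlt with hu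
    have huval : (u : HB →L[ℂ] HB) = S := by
      show (1 : HB →L[ℂ] HB) - ((1 : HB →L[ℂ] HB) - S) = S
      exact sub_sub_cancel _ _
    intro z
    refine ⟨(↑u⁻¹ : HB →L[ℂ] HB) z, ?_⟩
    calc S ((↑u⁻¹ : HB →L[ℂ] HB) z) = ((u : HB →L[ℂ] HB) * ↑u⁻¹) z := by rw [huval]; rfl
      _ = ((1 : HB →L[ℂ] HB)) z := by rw [u.mul_inv]
      _ = z := rfl
  -- every element of range TB comes from HA
  have hranB : ∀ y ∈ LinearMap.range (TB : H →ₗ[ℂ] lp (fun _ : I => K) 2), ∃ x ∈ HA, TB x = y := by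
    rintro _ ⟨x0, rfl⟩
    obtain ⟨w, hw⟩ := hSsurj ((Submodule.orthogonalProjectionOnto HB) x0)
    refine ⟨_root_.proj HA (w : H), Submodule.coe_mem _, ?_⟩
    have h1 : (Submodule.orthogonalProjectionOnto HB) (_root_.proj HA (w : H)) = S w := by rw [hSdef]; rfl
    rw [hkB (_root_.proj HA (w : H)), h1, hw, ← hkB x0]
    rfl
  have hranA : ∀ y ∈ LinearMap.range (TA : H →ₗ[ℂ] lp (fun _ : I => K) 2), ∃ x ∈ HA, TA x = y := by
    rintro _ ⟨x0, rfl⟩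
    exact ⟨(Submodule.orthogonalProjectionOnto HA) x0, Submodule.coe_mem _, (hkA x0).symm⟩
  -- arithmetic helper
  have harith : ∀ x : H, ∀ t : ℝ, (Real.sqrt α - μ) * ‖x‖ ≤ t →
      μ * ‖x‖ ≤ μ / (Real.sqrt α - μ) * t := by
    intro x t ht
    have h1 : μ * ‖x‖ = μ / (Real.sqrt α - μ) * ((Real.sqrt α - μ) * ‖x‖) := by
      field_simp
    rw [h1]
    exact mul_le_mul_of_nonneg_left ht (div_nonneg hμ0 hden.le)
  refine max_le ?_ ?_
  · refine gap_le _ _ (div_nonneg hμ0 hden.le) ?_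
    intro y hy
    obtain ⟨x, hx, rfl⟩ := hranA y hy
    have h1 : ‖_root_.proj (LinearMap.range (TB : H →ₗ[ℂ] lp (fun _ : I => K) 2))ᗮ (TA x)‖ ≤ ‖TA x - TB x‖ :=
      norm_proj_orthogonal_le_dist _ _ _ ⟨x, rfl⟩
    have h2 : (Real.sqrt α - μ) * ‖x‖ ≤ ‖TA x‖ := by
      have := hlow x hx
      nlinarith [norm_nonneg x]
    exact h1.trans ((hdiff x).trans (harith x _ h2))
  · refine gap_le _ _ (div_nonneg hμ0 hden.le) ?_
    intro y hy
    obtain ⟨x, hx, rfl⟩ := hranB y hy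
    have h1 : ‖_root_.proj (LinearMap.range (TA : H →ₗ[ℂ] lp (fun _ : I => K) 2))ᗮ (TB x)‖ ≤ ‖TB x - TA x‖ :=
      norm_proj_orthogonal_le_dist _ _ _ ⟨x, rfl⟩
    have h1' : ‖TB x - TA x‖ = ‖TA x - TB x‖ := norm_sub_rev _ _
    exact (h1.trans (h1'.le.trans (hdiff x))).trans (harith x _ (hlowB x hx))
end
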